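/- arXiv:1704.07375 — 3 statements merged into one kernel-verified Lean document; each statement's English description precedes it below -/
import Mathlib

section
/- For any two nonzero orthogonal projection operators Π₀ and Π₁ on ℂ^r, the operator norm of their sum equals 1 plus the operator norm of their product: ‖Π₀ + Π₁‖ = 1 + ‖Π₀Π₁‖. -/
open scoped ComplexInnerProductSpace

section Aux

variable {E : Type*} [NormedAddCommGroup E] [InnerProductSpace ℂ E] [FiniteDimensional ℂ E]

/-- A nonzero self-adjoint idempotent has norm 1. -/
lemma aux_norm_one (S : E →L[ℂ] E) (hS : IsSelfAdjoint S) (h2 : S ∘L S = S) (h0 : S ≠ 0) :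
    ‖S‖ = 1 := by
  have h := CStarRing.norm_star_mul_self (x := S)
  rw [hS.star_eq] at h
  have h2' : S * S = S := h2
  rw [h2'] at h
  have hn : ‖S‖ ≠ 0 := norm_ne_zero_iff.mpr h0
  have : ‖S‖ * 1 = ‖S‖ * ‖S‖ := by linarith
  exact (mul_left_cancel₀ hn this).symm

/-- The operator norm is attained on the unit sphere (finite dimensions). -/
lemma aux_attain (T : E →L[ℂ] E) [Nontrivial E] : ∃ x : E, ‖x‖ = 1 ∧ ‖T x‖ = ‖T‖ := by
  have hne : (Metric.sphere (0:E) 1).Nonempty := NormedSpace.sphere_nonempty.mpr zero_le_one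
  obtain ⟨x, hx, hmax⟩ := (isCompact_sphere (0:E) 1).exists_isMaxOn hne
    (Continuous.continuousOn (by continuity : Continuous fun y : E => ‖T y‖))
  rw [Metric.mem_sphere, dist_zero_right] at hx
  refine ⟨x, hx, le_antisymm (by simpa [hx] using T.le_opNorm x) ?_⟩
  refine T.opNorm_le_bound (norm_nonneg _) fun y => ?_
  rcases eq_or_ne y 0 with rfl | hy
  · simp
  · have hyn : ‖y‖ ≠ 0 := norm_ne_zero_iff.mpr hy
    have hmem : (‖y‖⁻¹ : ℂ) • y ∈ Metric.sphere (0:E) 1 := by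
      simp [norm_smul, hyn]
    have := hmax hmem
    simp only [Set.mem_setOf_eq, map_smul] at this
    rw [norm_smul] at this
    have : ‖y‖⁻¹ * ‖T y‖ ≤ ‖T x‖ := by
      simpa [Complex.norm_real, abs_norm] using this
    calc ‖T y‖ = ‖y‖ * (‖y‖⁻¹ * ‖T y‖) := by field_simp
    _ ≤ ‖y‖ * ‖T x‖ := mul_le_mul_of_nonneg_left this (norm_nonneg y)
    _ = ‖T x‖ * ‖y‖ := mul_comm _ _

/-- Cauchy–Schwarz equality trick: if `‖a‖ ≤ t`, `‖u‖ = 1` and `re ⟪a, u⟫ = t`,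
then `a = t • u`. -/
lemma aux_cs_eq (a u : E) (t : ℝ) (hu : ‖u‖ = 1) (hna : ‖a‖ ≤ t)
    (hre : (⟪a, u⟫).re = t) : a = (t : ℂ) • u := by
  have ht : 0 ≤ t := le_trans (norm_nonneg a) hna
  have h2 : ‖(t:ℂ) • u‖ = t := by
    rw [norm_smul, hu]; simp [abs_of_nonneg ht]
  have h1 : (⟪a, (t:ℂ) • u⟫).re = t * t := by
    rw [inner_smul_right]; simp [Complex.mul_re, hre]
  have key : ‖a - (t:ℂ) • u‖ ^ 2 ≤ 0 := by
    rw [@norm_sub_sq ℂ, h2]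
    simp only [RCLike.re_to_complex]
    rw [h1]
    nlinarith [norm_nonneg a, hna]
  have h0 : a - (t:ℂ) • u = 0 := by
    rw [← norm_eq_zero]
    nlinarith [norm_nonneg (a - (t:ℂ) • u)]
  exact sub_eq_zero.mp h0

end Aux

set_option maxHeartbeats 1000000 in
open ContinuousLinearMap in
lemma aux_main {E : Type*} [NormedAddCommGroup E] [InnerProductSpace ℂ E]
    [FiniteDimensional ℂ E] [CompleteSpace E]
    (P₀ P₁ : E →L[ℂ] E)
    (h₀ : P₀ ≠ 0) (h₁ : P₁ ≠ 0)
    (hsa₀ : IsSelfAdjoint P₀) (hsa₁ : IsSelfAdjoint P₁)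
    (hp₀ : P₀ ∘L P₀ = P₀) (hp₁ : P₁ ∘L P₁ = P₁) :
    ‖P₀ + P₁‖ = 1 + ‖P₀ ∘L P₁‖ := by
  haveI hnt : Nontrivial E := by
    by_contra h
    rw [not_nontrivial_iff_subsingleton] at h
    exact h₀ (ContinuousLinearMap.ext fun x => Subsingleton.elim _ _)
  set c := ‖P₀ ∘L P₁‖ with hc
  have hc0 : (0:ℝ) ≤ c := norm_nonneg _
  have hstar : star (P₀ ∘L P₁) = P₁ ∘L P₀ := by
    have h := star_mul P₀ P₁
    rw [hsa₀.star_eq, hsa₁.star_eq] at h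
    exact h
  have hQP : ‖P₁ ∘L P₀‖ = c := by rw [← hstar]; exact norm_star (P₀ ∘L P₁)
  have hP1 : ‖P₀‖ = 1 := aux_norm_one P₀ hsa₀ hp₀ h₀
  have hQ1 : ‖P₁‖ = 1 := aux_norm_one P₁ hsa₁ hp₁ h₁
  have hsym₀ := hsa₀.isSymmetric
  have hsym₁ := hsa₁.isSymmetric
  have hidem₀ : ∀ z, P₀ (P₀ z) = P₀ z := fun z => by
    simpa using DFunLike.congr_fun hp₀ z
  have hidem₁ : ∀ z, P₁ (P₁ z) = P₁ z := fun z => by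
    simpa using DFunLike.congr_fun hp₁ z
  rcases hc0.eq_or_lt with hc0' | hcpos
  · -- orthogonal case : the product is zero
    have hPQ : P₀ ∘L P₁ = 0 := by rw [← norm_eq_zero, ← hc]; exact hc0'.symm
    have hS0 : P₀ + P₁ ≠ 0 := by
      intro hS
      have hQneg : P₁ = -P₀ := eq_neg_of_add_eq_zero_right hS
      rw [hQneg] at hp₁
      simp only [ContinuousLinearMap.comp_neg, ContinuousLinearMap.neg_comp, neg_neg] at hp₁
      rw [hp₀] at hp₁
      have h2 : (2:ℂ) • P₀ = 0 := by
        rw [two_smul ℂ P₀]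
        nth_rewrite 2 [hp₁]
        simp
      rcases smul_eq_zero.mp h2 with h | h
      · exact absurd h two_ne_zero
      · exact h₀ h
    have hSidem : (P₀ + P₁) ∘L (P₀ + P₁) = P₀ + P₁ := by
      have hQP0 : P₁ ∘L P₀ = 0 := by rw [← hstar, hPQ, star_zero]
      have hmul : (P₀ + P₁) * (P₀ + P₁) = P₀*P₀ + P₀*P₁ + (P₁*P₀ + P₁*P₁) := by
        noncomm_ring
      have : (P₀ + P₁) ∘L (P₀ + P₁) = P₀∘LP₀ + P₀∘LP₁ + (P₁∘LP₀ + P₁∘LP₁) := hmul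
      rw [this, hp₀, hp₁, hPQ, hQP0]
      abel
    rw [aux_norm_one _ (hsa₀.add hsa₁) hSidem hS0, ← hc0']
    norm_num
  · -- main case : c > 0
    -- ## Lower bound
    obtain ⟨x, hx1, hxPQ⟩ := aux_attain (P₀ ∘L P₁)
    set u := P₁ x with hu_def
    have hQu : P₁ u = u := hidem₁ x
    have hPu : ‖P₀ u‖ = c := by simpa using hxPQ
    have hu1 : ‖u‖ = 1 := by
      have hle : ‖u‖ ≤ 1 := by
        calc ‖P₁ x‖ ≤ ‖P₁‖ * ‖x‖ := P₁.le_opNorm x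
        _ = 1 := by rw [hQ1, hx1, one_mul]
      have hge : c ≤ c * ‖u‖ := by
        calc c = ‖P₀ u‖ := hPu.symm
        _ = ‖(P₀ ∘L P₁) u‖ := by simp [ContinuousLinearMap.comp_apply, hQu]
        _ ≤ c * ‖u‖ := (P₀ ∘L P₁).le_opNorm u
      nlinarith
    have hinner : (⟪P₀ u, u⟫).re = c^2 := by
      have h1 : ⟪P₀ u, u⟫ = ⟪P₀ u, P₀ u⟫ := by
        conv_lhs => rw [← hidem₀ u]
        exact hsym₀ (P₀ u) u
      rw [h1]
      have h2 := @inner_self_eq_norm_sq ℂ _ _ _ _ (P₀ u)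
      simp only [RCLike.re_to_complex] at h2
      rw [h2, hPu]
    have hQPu : P₁ (P₀ u) = ((c^2 : ℝ) : ℂ) • u := by
      apply aux_cs_eq _ _ _ hu1
      · calc ‖P₁ (P₀ u)‖ = ‖(P₁ ∘L P₀) (P₀ u)‖ := by
              simp [ContinuousLinearMap.comp_apply, hidem₀]
        _ ≤ ‖P₁ ∘L P₀‖ * ‖P₀ u‖ := (P₁ ∘L P₀).le_opNorm _
        _ = c * c := by rw [hQP, hPu]
        _ = c^2 := (sq c).symm
      · have h2 : ⟪P₁ (P₀ u), u⟫ = ⟪P₀ u, P₁ u⟫ := hsym₁ (P₀ u) u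
        rw [h2, hQu]
        exact hinner
    set x₀ := ((c:ℝ):ℂ) • u + P₀ u with hx₀def
    have hux₀ : (⟪u, x₀⟫).re = c + c^2 := by
      rw [hx₀def, inner_add_right, inner_smul_right]
      have h3 : ⟪u, P₀ u⟫ = ⟪P₀ u, u⟫ := (hsym₀ u u).symm
      have h4 : ⟪u, u⟫ = (1:ℂ) := by
        rw [@inner_self_eq_norm_sq_to_K ℂ, hu1]; norm_num
      rw [h3, h4, mul_one, Complex.add_re, Complex.ofReal_re, hinner]
    have hx₀ : x₀ ≠ 0 := by
      intro h
      rw [h, inner_zero_right] at hux₀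
      simp only [Complex.zero_re] at hux₀
      nlinarith
    have heig : (P₀ + P₁) x₀ = ((1 + c : ℝ) : ℂ) • x₀ := by
      rw [hx₀def]
      simp only [ContinuousLinearMap.add_apply, map_add, map_smul, hQu, hQPu, hidem₀]
      push_cast
      module
    have hlow : 1 + c ≤ ‖P₀ + P₁‖ := by
      have h1 : ‖(P₀+P₁) x₀‖ = (1+c) * ‖x₀‖ := by
        rw [heig, norm_smul, Complex.norm_real, Real.norm_eq_abs,
          abs_of_nonneg (by linarith : (0:ℝ) ≤ 1 + c)]
      have h2 := (P₀+P₁).le_opNorm x₀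
      have hx₀n : 0 < ‖x₀‖ := norm_pos_iff.mpr hx₀
      rw [h1] at h2
      exact (mul_le_mul_iff_of_pos_right hx₀n).mp h2
    -- ## Upper bound
    set L := ‖P₀ + P₁‖ with hL
    have hlam1 : 1 < L := by linarith
    obtain ⟨y, hy1, hySy⟩ := aux_attain (P₀ + P₁)
    have hsaS : IsSelfAdjoint (P₀ + P₁) := hsa₀.add hsa₁
    have hsymS := hsaS.isSymmetric
    have hSSy : (P₀+P₁) ((P₀+P₁) y) = ((L^2 : ℝ) : ℂ) • y := by
      apply aux_cs_eq _ _ _ hy1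
      · calc ‖(P₀+P₁) ((P₀+P₁) y)‖ ≤ ‖P₀+P₁‖ * ‖(P₀+P₁) y‖ := (P₀+P₁).le_opNorm _
        _ = L * L := by rw [hySy]
        _ = L^2 := (sq L).symm
      · have h5 : ⟪(P₀+P₁) ((P₀+P₁) y), y⟫ = ⟪(P₀+P₁) y, (P₀+P₁) y⟫ := hsymS _ _
        rw [h5]
        have h6 := @inner_self_eq_norm_sq ℂ _ _ _ _ ((P₀+P₁) y)
        simp only [RCLike.re_to_complex] at h6
        rw [h6, hySy]
    have hSy : (P₀+P₁) y = ((L:ℝ):ℂ) • y := by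
      set w := (P₀+P₁) y - (L:ℂ) • y with hwdef
      have hSw : (P₀+P₁) w = (-(L:ℂ)) • w := by
        rw [hwdef, map_sub, map_smul, hSSy]
        push_cast
        module
      have hpos : 0 ≤ (⟪(P₀+P₁) w, w⟫).re := by
        have e : ⟪(P₀+P₁) w, w⟫ = ⟪P₀ w, P₀ w⟫ + ⟪P₁ w, P₁ w⟫ := by
          rw [ContinuousLinearMap.add_apply, inner_add_left]
          congr 1
          · conv_lhs => rw [← hidem₀ w]
            exact hsym₀ (P₀ w) w
          · conv_lhs => rw [← hidem₁ w]
            exact hsym₁ (P₁ w) w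
        rw [e, Complex.add_re]
        have g0 := @inner_self_nonneg ℂ _ _ _ _ (P₀ w)
        have g1 := @inner_self_nonneg ℂ _ _ _ _ (P₁ w)
        simp only [RCLike.re_to_complex] at g0 g1
        linarith
      have hneg : (⟪(P₀+P₁) w, w⟫).re = -(L * ‖w‖^2) := by
        rw [hSw, inner_smul_left]
        have e2 : ⟪w, w⟫ = ((‖w‖:ℂ))^2 := @inner_self_eq_norm_sq_to_K ℂ _ _ _ _ w
        rw [e2]
        have e3 : (starRingEnd ℂ) (-(L:ℂ)) * ((‖w‖:ℂ))^2 = ((-(L * ‖w‖^2) : ℝ) : ℂ) := by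
          simp only [map_neg, Complex.conj_ofReal]
          push_cast
          ring
        rw [e3, Complex.ofReal_re]
      have hw0 : w = 0 := by
        have hL0 : (0:ℝ) < L := by linarith
        have h6 : ‖w‖^2 ≤ 0 := by nlinarith
        have h7 : ‖w‖ = 0 := by nlinarith [norm_nonneg w]
        exact norm_eq_zero.mp h7
      have := sub_eq_zero.mp (hwdef ▸ hw0)
      exact this
    have heq : P₀ y + P₁ y = ((L:ℝ):ℂ) • y := by
      simpa [ContinuousLinearMap.add_apply] using hSy
    have hPQy : P₀ (P₁ y) = ((L - 1 : ℝ):ℂ) • P₀ y := by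
      have h8 := congrArg P₀ heq
      simp only [map_add, map_smul, hidem₀] at h8
      have : P₀ (P₁ y) = ((L:ℝ):ℂ) • P₀ y - P₀ y := by
        rw [← h8]; abel
      rw [this]
      push_cast
      module
    have hQPy : P₁ (P₀ y) = ((L - 1 : ℝ):ℂ) • P₁ y := by
      have h8 := congrArg P₁ heq
      simp only [map_add, map_smul, hidem₁] at h8
      have : P₁ (P₀ y) = ((L:ℝ):ℂ) • P₁ y - P₁ y := by
        rw [← h8]; abel
      rw [this]
      push_cast
      module
    have hbound : ∀ R : E →L[ℂ] E,
        ‖R‖ = 1 → ‖R y‖ ≤ 1 := fun R hR => by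
      calc ‖R y‖ ≤ ‖R‖ * ‖y‖ := R.le_opNorm y
      _ = 1 := by rw [hR, hy1, one_mul]
    have ha : 0 < ‖P₀ y‖ := by
      rcases eq_or_ne (P₀ y) 0 with h9 | h9
      · exfalso
        rw [h9, zero_add] at heq
        have hPL : ‖P₁ y‖ = L := by
          rw [heq, norm_smul, Complex.norm_real, Real.norm_eq_abs,
            abs_of_nonneg (by linarith : (0:ℝ) ≤ L), hy1, mul_one]
        have := hbound P₁ hQ1
        linarith
      · exact norm_pos_iff.mpr h9
    have hb : 0 < ‖P₁ y‖ := by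
      rcases eq_or_ne (P₁ y) 0 with h9 | h9
      · exfalso
        rw [h9, add_zero] at heq
        have hPL : ‖P₀ y‖ = L := by
          rw [heq, norm_smul, Complex.norm_real, Real.norm_eq_abs,
            abs_of_nonneg (by linarith : (0:ℝ) ≤ L), hy1, mul_one]
        have := hbound P₀ hP1
        linarith
      · exact norm_pos_iff.mpr h9
    have hLnn : (0:ℝ) ≤ L - 1 := by linarith
    have ineq1 : (L-1) * ‖P₀ y‖ ≤ c * ‖P₁ y‖ := by
      calc (L-1) * ‖P₀ y‖ = ‖((L-1:ℝ):ℂ) • P₀ y‖ := by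
            rw [norm_smul, Complex.norm_real, Real.norm_eq_abs, abs_of_nonneg hLnn]
      _ = ‖P₀ (P₁ y)‖ := by rw [hPQy]
      _ = ‖(P₀ ∘L P₁) (P₁ y)‖ := by simp [ContinuousLinearMap.comp_apply, hidem₁]
      _ ≤ c * ‖P₁ y‖ := (P₀ ∘L P₁).le_opNorm _
    have ineq2 : (L-1) * ‖P₁ y‖ ≤ c * ‖P₀ y‖ := by
      calc (L-1) * ‖P₁ y‖ = ‖((L-1:ℝ):ℂ) • P₁ y‖ := by
            rw [norm_smul, Complex.norm_real, Real.norm_eq_abs, abs_of_nonneg hLnn]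
      _ = ‖P₁ (P₀ y)‖ := by rw [hQPy]
      _ = ‖(P₁ ∘L P₀) (P₀ y)‖ := by simp [ContinuousLinearMap.comp_apply, hidem₀]
      _ ≤ ‖P₁ ∘L P₀‖ * ‖P₀ y‖ := (P₁ ∘L P₀).le_opNorm _
      _ = c * ‖P₀ y‖ := by rw [hQP]
    have hup : L ≤ 1 + c := by
      nlinarith [mul_le_mul ineq1 ineq2 (by positivity) (by positivity),
        mul_pos ha hb]
    linarith


/-- For any two nonzero orthogonal projection operators `P₀` and `P₁` on `ℂ^r`, the
operator norm of their sum equals `1` plus the operator norm of their product. -/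
theorem stmt_0 (r : ℕ)
    (P₀ P₁ : EuclideanSpace ℂ (Fin r) →L[ℂ] EuclideanSpace ℂ (Fin r))
    (h₀ : P₀ ≠ 0) (h₁ : P₁ ≠ 0)
    (hsa₀ : IsSelfAdjoint P₀) (hsa₁ : IsSelfAdjoint P₁)
    (hp₀ : P₀ ∘L P₀ = P₀) (hp₁ : P₁ ∘L P₁ = P₁) :
    ‖P₀ + P₁‖ = 1 + ‖P₀ ∘L P₁‖ :=
  aux_main P₀ P₁ h₀ h₁ hsa₀ hsa₁ hp₀ hp₁
end

section
/- For any two unit vectors u₀, u₁ in ℂ^r, the operator norm of u₀u₀* + u₁u₁* equals 1 + |⟨u₀, u₁⟩|. -/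
open scoped InnerProductSpace

/-- The rank-one operator `u u*` on `ℂ^r`, sending `v` to `⟪u, v⟫ • u`. -/
noncomputable def outer {r : ℕ} (u : EuclideanSpace ℂ (Fin r)) :
    EuclideanSpace ℂ (Fin r) →L[ℂ] EuclideanSpace ℂ (Fin r) :=
  (innerSL ℂ u).smulRight u

/-- For unit vectors `u₀, u₁` in `ℂ^r`, the operator norm of `u₀u₀* + u₁u₁*`
equals `1 + |⟨u₀, u₁⟩|`. -/
theorem stmt_1 (r : ℕ) (u₀ u₁ : EuclideanSpace ℂ (Fin r))
    (h₀ : ‖u₀‖ = 1) (h₁ : ‖u₁‖ = 1) :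
    ‖outer u₀ + outer u₁‖ = 1 + ‖⟪u₀, u₁⟫_ℂ‖ := by
  set c : ℂ := ⟪u₀, u₁⟫_ℂ with hc
  have hcn : (0:ℝ) ≤ ‖c‖ := norm_nonneg _
  have happ : ∀ w : EuclideanSpace ℂ (Fin r),
      (outer u₀ + outer u₁) w = ⟪u₀, w⟫_ℂ • u₀ + ⟪u₁, w⟫_ℂ • u₁ := fun w => rfl
  -- Upper bound
  have upper : ‖outer u₀ + outer u₁‖ ≤ 1 + ‖c‖ := by
    apply ContinuousLinearMap.opNorm_le_bound _ (by linarith)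
    intro w
    rw [happ w]
    set a := ⟪u₀, w⟫_ℂ with ha
    set b := ⟪u₁, w⟫_ℂ with hb
    set T := a • u₀ + b • u₁ with hT
    set N := ‖T‖ with hN
    have hNn : (0:ℝ) ≤ N := norm_nonneg _
    have h1 : N^2 ≤ (‖a‖^2 + ‖b‖^2) * (1 + ‖c‖) := by
      have expand : N^2 = ‖a‖^2 + 2 * Complex.re ⟪a • u₀, b • u₁⟫_ℂ + ‖b‖^2 := by
        rw [hN, hT, @norm_add_sq ℂ, norm_smul, norm_smul, h₀, h₁]
        simp only [mul_one, RCLike.re_to_complex]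
      have hinner : ⟪a • u₀, b • u₁⟫_ℂ = (starRingEnd ℂ a) * b * c := by
        rw [inner_smul_left, inner_smul_right, ← hc]; ring
      have hre : Complex.re ⟪a • u₀, b • u₁⟫_ℂ ≤ ‖a‖ * ‖b‖ * ‖c‖ := by
        calc Complex.re ⟪a • u₀, b • u₁⟫_ℂ ≤ ‖⟪a • u₀, b • u₁⟫_ℂ‖ :=
              Complex.re_le_norm _
          _ = ‖a‖ * ‖b‖ * ‖c‖ := by rw [hinner]; simp [norm_mul]
      nlinarith [sq_nonneg (‖a‖ - ‖b‖), norm_nonneg a, norm_nonneg b]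
    have h2 : ‖a‖^2 + ‖b‖^2 ≤ ‖w‖ * N := by
      have hwT : ⟪w, T⟫_ℂ = a * (starRingEnd ℂ a) + b * (starRingEnd ℂ b) := by
        rw [hT, inner_add_right, inner_smul_right, inner_smul_right,
          ← inner_conj_symm w u₀, ← inner_conj_symm w u₁, ← ha, ← hb]
      have hre : Complex.re ⟪w, T⟫_ℂ = ‖a‖^2 + ‖b‖^2 := by
        rw [hwT]
        simp only [Complex.mul_conj, Complex.add_re, Complex.ofReal_re,
          Complex.normSq_eq_norm_sq]
      calc ‖a‖^2 + ‖b‖^2 = Complex.re ⟪w, T⟫_ℂ := hre.symm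
        _ ≤ ‖⟪w, T⟫_ℂ‖ := Complex.re_le_norm _
        _ ≤ ‖w‖ * N := norm_inner_le_norm _ _
    have hkey : N^2 ≤ (1 + ‖c‖) * ‖w‖ * N := by
      calc N^2 ≤ (‖a‖^2 + ‖b‖^2) * (1 + ‖c‖) := h1
        _ ≤ (‖w‖ * N) * (1 + ‖c‖) := by
            apply mul_le_mul_of_nonneg_right h2 (by linarith)
        _ = (1 + ‖c‖) * ‖w‖ * N := by ring
    rcases eq_or_lt_of_le hNn with h | h
    · rw [← h]
      positivity
    · nlinarith
  -- Lower bound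
  have lower : 1 + ‖c‖ ≤ ‖outer u₀ + outer u₁‖ := by
    set α : ℂ := if c = 0 then 1 else (starRingEnd ℂ c) / ‖c‖ with hα
    have hαc : α * c = (‖c‖ : ℂ) := by
      rcases eq_or_ne c 0 with h | h
      · simp [hα, h]
      · have habs : ((‖c‖ : ℝ) : ℂ) ≠ 0 := by
          simpa using h
        rw [hα, if_neg h, div_mul_eq_mul_div, ← Complex.normSq_eq_conj_mul_self,
          Complex.normSq_eq_norm_sq]
        push_cast
        rw [sq, mul_div_assoc, div_self habs, mul_one]
    have hcα : (starRingEnd ℂ c) = α * ‖c‖ := by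
      rcases eq_or_ne c 0 with h | h
      · simp [hα, h]
      · have habs : ((‖c‖ : ℝ) : ℂ) ≠ 0 := by
          simpa using h
        rw [hα, if_neg h, div_mul_eq_mul_div, mul_div_assoc, div_self habs, mul_one]
    set v := u₀ + α • u₁ with hv
    have hv0 : ⟪u₀, v⟫_ℂ = 1 + ‖c‖ := by
      rw [hv, inner_add_right, inner_smul_right, ← hc, hαc,
        inner_self_eq_norm_sq_to_K, h₀]
      norm_num
    have hv1 : ⟪u₁, v⟫_ℂ = α * (1 + ‖c‖) := by
      rw [hv, inner_add_right, inner_smul_right, ← inner_conj_symm u₁ u₀, ← hc, hcα,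
        inner_self_eq_norm_sq_to_K, h₁]
      push_cast
      ring
    have hTv : (outer u₀ + outer u₁) v = ((1 + ‖c‖ : ℝ) : ℂ) • v := by
      rw [happ v, hv0, hv1, hv, smul_add, smul_smul]
      push_cast
      ring_nf
    have hvne : v ≠ 0 := by
      intro h
      rw [h, inner_zero_right] at hv0
      have h' : (0 : ℝ) = 1 + ‖c‖ := by exact_mod_cast hv0
      linarith
    have hvpos : (0:ℝ) < ‖v‖ := norm_pos_iff.mpr hvne
    have hle := ContinuousLinearMap.le_opNorm (outer u₀ + outer u₁) v
    rw [hTv, norm_smul] at hle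
    have hns : ‖((1 + ‖c‖ : ℝ) : ℂ)‖ = 1 + ‖c‖ := by
      rw [Complex.norm_real, Real.norm_of_nonneg (by linarith)]
    rw [hns] at hle
    exact le_of_mul_le_mul_right hle hvpos
  exact le_antisymm upper lower
end

section
/- For the BB84 monogamy-of-entanglement game, the unentangled value equals cos²(π/8): max over functions f : {0,1} → {0,1} of ‖(1/2)R(f(0)|0) + (1/2)R(f(1)|1)‖ = cos²(π/8), where R(0|0) = e₀e₀*, R(1|0) = e₁e₁*, R(0|1) = e₊e₊*, R(1|1) = e₋e₋*. -/
open Matrix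

/-- The operator (spectral) norm of a square complex matrix. -/
noncomputable def opNorm {n : Type*} [Fintype n] [DecidableEq n] (A : Matrix n n ℂ) : ℝ :=
  ‖Matrix.toEuclideanCLM (𝕜 := ℂ) A‖

/-- The referee's measurements for the BB84 monogamy-of-entanglement game:
`R a x` is the projection for answer `a` on question `x`. -/
noncomputable def bb84R (a x : Fin 2) : Matrix (Fin 2) (Fin 2) ℂ :=
  if x = 0 then
    (if a = 0 then !![1, 0; 0, 0] else !![0, 0; 0, 1])
  else
    (if a = 0 then !![1/2, 1/2; 1/2, 1/2] else !![1/2, -(1/2); -(1/2), 1/2])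

lemma Matrix.toEuclideanCLM_piLp_equiv_symm (A : Matrix (Fin 2) (Fin 2) ℂ) (w : Fin 2 → ℂ) :
    Matrix.toEuclideanCLM (𝕜 := ℂ) A ((WithLp.equiv 2 (Fin 2 → ℂ)).symm w)
      = (WithLp.equiv 2 (Fin 2 → ℂ)).symm (Matrix.toLin' A w) := rfl

lemma WithLp.equiv_symm_smul (c : ℂ) (w : Fin 2 → ℂ) :
    (WithLp.equiv 2 (Fin 2 → ℂ)).symm (c • w) = c • (WithLp.equiv 2 (Fin 2 → ℂ)).symm w := rfl

lemma aux_ub (p q r c : ℝ) (hc : 0 ≤ c)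
    (H : ∀ a1 a2 b1 b2 : ℝ,
      (p*a1+q*b1)^2+(p*a2+q*b2)^2+(q*a1+r*b1)^2+(q*a2+r*b2)^2
        ≤ c^2*((a1^2+a2^2)+(b1^2+b2^2)))
    (x : EuclideanSpace ℂ (Fin 2)) :
    ‖Matrix.toEuclideanCLM (𝕜 := ℂ) !![(p:ℂ),(q:ℂ);(q:ℂ),(r:ℂ)] x‖ ≤ c * ‖x‖ := by
  set a : ℂ := x 0 with ha
  set b : ℂ := x 1 with hb
  have hx : x = (WithLp.equiv 2 (Fin 2 → ℂ)).symm ![a, b] := by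
    ext i; fin_cases i <;> rfl
  rw [hx, Matrix.toEuclideanCLM_piLp_equiv_symm]
  rw [EuclideanSpace.norm_eq, EuclideanSpace.norm_eq]
  have hcomp : ∀ w : Fin 2 → ℂ, ∀ i, ((WithLp.equiv 2 (Fin 2 → ℂ)).symm w) i = w i :=
    fun _ _ => rfl
  simp only [hcomp, Fin.sum_univ_two, Matrix.toLin'_apply, Matrix.mulVec,
    dotProduct, Fin.sum_univ_two, Matrix.cons_val', Matrix.cons_val_zero,
    Matrix.cons_val_one, Matrix.head_cons, Matrix.empty_val', Matrix.cons_val_fin_one,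
    Matrix.head_fin_const]
  have key : ‖(p:ℂ)*a+(q:ℂ)*b‖^2 + ‖(q:ℂ)*a+(r:ℂ)*b‖^2 ≤ c^2*(‖a‖^2+‖b‖^2) := by
    have h := H a.re a.im b.re b.im
    simp only [Complex.sq_norm, Complex.normSq_apply, Complex.add_re,
      Complex.add_im, Complex.mul_re, Complex.mul_im, Complex.ofReal_re, Complex.ofReal_im]
    nlinarith [h]
  calc Real.sqrt (‖(p:ℂ)*a+(q:ℂ)*b‖^2 + ‖(q:ℂ)*a+(r:ℂ)*b‖^2)
      ≤ Real.sqrt (c^2*(‖a‖^2+‖b‖^2)) := Real.sqrt_le_sqrt key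
    _ = c * Real.sqrt (‖a‖^2+‖b‖^2) := by
        rw [Real.sqrt_mul (sq_nonneg c), Real.sqrt_sq hc]

lemma aux_norm_eq (A : Matrix (Fin 2) (Fin 2) ℂ) (c : ℝ) (hc : 0 ≤ c)
    (hub : ∀ x : EuclideanSpace ℂ (Fin 2),
      ‖Matrix.toEuclideanCLM (𝕜 := ℂ) A x‖ ≤ c * ‖x‖)
    (v : EuclideanSpace ℂ (Fin 2)) (hv : v ≠ 0)
    (hev : Matrix.toEuclideanCLM (𝕜 := ℂ) A v = (c:ℂ) • v) :
    opNorm A = c := by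
  refine le_antisymm (ContinuousLinearMap.opNorm_le_bound _ hc hub) ?_
  have h := (Matrix.toEuclideanCLM (𝕜 := ℂ) A).le_opNorm v
  rw [hev, norm_smul] at h
  have hvn : 0 < ‖v‖ := norm_pos_iff.mpr hv
  have hcn : ‖(c:ℂ)‖ = c := by
    rw [Complex.norm_real, Real.norm_eq_abs, abs_of_nonneg hc]
  rw [hcn] at h
  exact le_of_mul_le_mul_right h hvn

lemma aux_eigen (A : Matrix (Fin 2) (Fin 2) ℂ) (c : ℝ) (va vb : ℂ)
    (h : A *ᵥ ![va, vb] = (c:ℂ) • ![va, vb]) :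
    Matrix.toEuclideanCLM (𝕜 := ℂ) A ((WithLp.equiv 2 (Fin 2 → ℂ)).symm ![va, vb])
      = (c:ℂ) • (WithLp.equiv 2 (Fin 2 → ℂ)).symm ![va, vb] := by
  rw [Matrix.toEuclideanCLM_piLp_equiv_symm, Matrix.toLin'_apply, h, WithLp.equiv_symm_smul]

lemma aux_ne_zero0 (va vb : ℂ) (h : va ≠ 0) :
    ((WithLp.equiv 2 (Fin 2 → ℂ)).symm ![va, vb]) ≠ 0 := by
  intro h0
  apply h
  have := congrArg (fun y : EuclideanSpace ℂ (Fin 2) => y 0) h0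
  simpa using this

lemma aux_ne_zero1 (va vb : ℂ) (h : vb ≠ 0) :
    ((WithLp.equiv 2 (Fin 2 → ℂ)).symm ![va, vb]) ≠ 0 := by
  intro h0
  apply h
  have := congrArg (fun y : EuclideanSpace ℂ (Fin 2) => y 1) h0
  simpa using this

lemma sqrt2_sq : ((Real.sqrt 2 : ℝ) : ℂ) * ((Real.sqrt 2 : ℝ) : ℂ) = 2 := by
  norm_cast
  exact Real.mul_self_sqrt (by norm_num)

lemma key0 (a b : ℝ) :
    2*a*b ≤ (Real.sqrt 2 - 1)*a^2 + (Real.sqrt 2 + 1)*b^2 := by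
  have hs : Real.sqrt 2 * Real.sqrt 2 = 2 := Real.mul_self_sqrt (by norm_num)
  have hpos : (0:ℝ) < Real.sqrt 2 + 1 := by positivity
  have h : (Real.sqrt 2 + 1) * ((Real.sqrt 2 - 1)*a^2 + (Real.sqrt 2 + 1)*b^2 - 2*a*b)
      = (a - (Real.sqrt 2 + 1)*b)^2 := by
    linear_combination a^2 * hs
  nlinarith [sq_nonneg (a - (Real.sqrt 2 + 1)*b), h, hpos]

lemma hc2 : ((2+Real.sqrt 2)/4)^2 = (6+4*Real.sqrt 2)/16 := by
  have hs : Real.sqrt 2 * Real.sqrt 2 = 2 := Real.mul_self_sqrt (by norm_num)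
  linear_combination hs/16

lemma hc_nonneg : (0:ℝ) ≤ (2+Real.sqrt 2)/4 := by positivity

set_option maxHeartbeats 1000000 in
/-- The unentangled value of the BB84 monogamy-of-entanglement game equals `cos²(π/8)`:
the maximum over answer functions `f : {0,1} → {0,1}` of
`‖(1/2)R(f(0)|0) + (1/2)R(f(1)|1)‖` is `cos²(π/8)`. -/
theorem stmt_13 :
    (⨆ f : Fin 2 → Fin 2,
        opNorm ((1 / 2 : ℂ) • bb84R (f 0) 0 + (1 / 2 : ℂ) • bb84R (f 1) 1))
      = Real.cos (Real.pi / 8) ^ 2 := by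
  have hcos : Real.cos (Real.pi / 8) ^ 2 = (2+Real.sqrt 2)/4 := by
    rw [Real.cos_sq]
    rw [show 2 * (Real.pi / 8) = Real.pi / 4 by ring, Real.cos_pi_div_four]
    ring
  have hval : ∀ f : Fin 2 → Fin 2,
      opNorm ((1 / 2 : ℂ) • bb84R (f 0) 0 + (1 / 2 : ℂ) • bb84R (f 1) 1)
        = (2+Real.sqrt 2)/4 := by
    intro f
    have h0 : f 0 = 0 ∨ f 0 = 1 := by omega
    have h1 : f 1 = 0 ∨ f 1 = 1 := by omega
    rcases h0 with h0 | h0 <;> rcases h1 with h1 | h1 <;> rw [h0, h1]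
    · -- M = [[3/4,1/4],[1/4,1/4]], eigenvector (1, √2-1)
      have hA : (1 / 2 : ℂ) • bb84R 0 0 + (1 / 2 : ℂ) • bb84R 0 1
          = !![((3/4:ℝ):ℂ), ((1/4:ℝ):ℂ); ((1/4:ℝ):ℂ), ((1/4:ℝ):ℂ)] := by
        ext i j; fin_cases i <;> fin_cases j <;> norm_num [bb84R]
      rw [hA]
      refine aux_norm_eq _ _ hc_nonneg
        (aux_ub (3/4) (1/4) (1/4) _ hc_nonneg ?_)
        ((WithLp.equiv 2 (Fin 2 → ℂ)).symm ![1, ((Real.sqrt 2:ℝ):ℂ)-1])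
        (aux_ne_zero0 _ _ one_ne_zero) (aux_eigen _ _ _ _ ?_)
      · intro a1 a2 b1 b2
        rw [hc2]
        nlinarith [key0 a1 b1, key0 a2 b2]
      · funext i
        fin_cases i
        · simp [Matrix.mulVec, dotProduct, Fin.sum_univ_two]
          ring
        · simp [Matrix.mulVec, dotProduct, Fin.sum_univ_two]
          linear_combination (-1/4 : ℂ) * sqrt2_sq
    · -- M = [[3/4,-1/4],[-1/4,1/4]], eigenvector (1, 1-√2)
      have hA : (1 / 2 : ℂ) • bb84R 0 0 + (1 / 2 : ℂ) • bb84R 1 1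
          = !![((3/4:ℝ):ℂ), ((-(1/4):ℝ):ℂ); ((-(1/4):ℝ):ℂ), ((1/4:ℝ):ℂ)] := by
        ext i j; fin_cases i <;> fin_cases j <;> norm_num [bb84R]
      rw [hA]
      refine aux_norm_eq _ _ hc_nonneg
        (aux_ub (3/4) (-(1/4)) (1/4) _ hc_nonneg ?_)
        ((WithLp.equiv 2 (Fin 2 → ℂ)).symm ![1, 1-((Real.sqrt 2:ℝ):ℂ)])
        (aux_ne_zero0 _ _ one_ne_zero) (aux_eigen _ _ _ _ ?_)
      · intro a1 a2 b1 b2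
        rw [hc2]
        nlinarith [key0 a1 (-b1), key0 a2 (-b2)]
      · funext i
        fin_cases i
        · simp [Matrix.mulVec, dotProduct, Fin.sum_univ_two]
          ring
        · simp [Matrix.mulVec, dotProduct, Fin.sum_univ_two]
          linear_combination (1/4 : ℂ) * sqrt2_sq
    · -- M = [[1/4,1/4],[1/4,3/4]], eigenvector (√2-1, 1)
      have hA : (1 / 2 : ℂ) • bb84R 1 0 + (1 / 2 : ℂ) • bb84R 0 1
          = !![((1/4:ℝ):ℂ), ((1/4:ℝ):ℂ); ((1/4:ℝ):ℂ), ((3/4:ℝ):ℂ)] := by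
        ext i j; fin_cases i <;> fin_cases j <;> norm_num [bb84R]
      rw [hA]
      refine aux_norm_eq _ _ hc_nonneg
        (aux_ub (1/4) (1/4) (3/4) _ hc_nonneg ?_)
        ((WithLp.equiv 2 (Fin 2 → ℂ)).symm ![((Real.sqrt 2:ℝ):ℂ)-1, 1])
        (aux_ne_zero1 _ _ one_ne_zero) (aux_eigen _ _ _ _ ?_)
      · intro a1 a2 b1 b2
        rw [hc2]
        nlinarith [key0 b1 a1, key0 b2 a2]
      · funext i
        fin_cases i
        · simp [Matrix.mulVec, dotProduct, Fin.sum_univ_two]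
          linear_combination (-1/4 : ℂ) * sqrt2_sq
        · simp [Matrix.mulVec, dotProduct, Fin.sum_univ_two]
          ring
    · -- M = [[1/4,-1/4],[-1/4,3/4]], eigenvector (1-√2, 1)
      have hA : (1 / 2 : ℂ) • bb84R 1 0 + (1 / 2 : ℂ) • bb84R 1 1
          = !![((1/4:ℝ):ℂ), ((-(1/4):ℝ):ℂ); ((-(1/4):ℝ):ℂ), ((3/4:ℝ):ℂ)] := by
        ext i j; fin_cases i <;> fin_cases j <;> norm_num [bb84R]
      rw [hA]
      refine aux_norm_eq _ _ hc_nonneg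
        (aux_ub (1/4) (-(1/4)) (3/4) _ hc_nonneg ?_)
        ((WithLp.equiv 2 (Fin 2 → ℂ)).symm ![1-((Real.sqrt 2:ℝ):ℂ), 1])
        (aux_ne_zero1 _ _ one_ne_zero) (aux_eigen _ _ _ _ ?_)
      · intro a1 a2 b1 b2
        rw [hc2]
        nlinarith [key0 (-b1) a1, key0 (-b2) a2]
      · funext i
        fin_cases i
        · simp [Matrix.mulVec, dotProduct, Fin.sum_univ_two]
          linear_combination (1/4 : ℂ) * sqrt2_sq
        · simp [Matrix.mulVec, dotProduct, Fin.sum_univ_two]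
          ring
  rw [hcos]
  simp only [hval]
  exact ciSup_const
end
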